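/- Let n ≥ 2 and let Λ ⊆ S^{n-1} × ℝ. Then: (a) there are no two points (x,θ), (x',θ') of Λ with θ ≤ θ' joined by a timelike curve (a map φ : [θ,θ'] → S^{n-1} with φ(θ) = x, φ(θ') = x' and arccos⟨φ(s),φ(t)⟩ < |s−t| for all s ≠ t) if and only if there exist E ⊆ S^{n-1} and f : E → ℝ with |f(x) − f(y)| ≤ arccos⟨x,y⟩ for all x,y ∈ E and Λ = {(x, f(x)) : x ∈ E}, i.e. Λ is the graph of a 1-Lipschitz function; (b) there are no two distinct points of Λ joined by a causal curve (a map φ as above with arccos⟨φ(s),φ(t)⟩ ≤ |s−t| for all s,t) if and only if Λ is the graph of a contracting function, i.e. one with |f(x) − f(y)| < arccos⟨x,y⟩ for all x ≠ y in E. -/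

import Mathlib

open scoped RealInnerProductSpace

/-- Two points of `S^{n-1} × ℝ` are joined by a timelike curve. -/
def JoinedTimelike (n : ℕ) (p q : EuclideanSpace ℝ (Fin n) × ℝ) : Prop :=
  ∃ φ : ℝ → EuclideanSpace ℝ (Fin n),
    (∀ t ∈ Set.Icc p.2 q.2, ‖φ t‖ = 1) ∧ φ p.2 = p.1 ∧ φ q.2 = q.1 ∧
    ∀ s ∈ Set.Icc p.2 q.2, ∀ t ∈ Set.Icc p.2 q.2, s ≠ t →
      Real.arccos ⟪φ s, φ t⟫ < |s - t|

/-- Two points of `S^{n-1} × ℝ` are joined by a causal curve. -/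
def JoinedCausal (n : ℕ) (p q : EuclideanSpace ℝ (Fin n) × ℝ) : Prop :=
  ∃ φ : ℝ → EuclideanSpace ℝ (Fin n),
    (∀ t ∈ Set.Icc p.2 q.2, ‖φ t‖ = 1) ∧ φ p.2 = p.1 ∧ φ q.2 = q.1 ∧
    ∀ s ∈ Set.Icc p.2 q.2, ∀ t ∈ Set.Icc p.2 q.2,
      Real.arccos ⟪φ s, φ t⟫ ≤ |s - t|

theorem aux_ortho (n : ℕ) (hn : 2 ≤ n) (x : EuclideanSpace ℝ (Fin n)) (hx : ‖x‖ = 1) :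
    ∃ u : EuclideanSpace ℝ (Fin n), ‖u‖ = 1 ∧ ⟪x, u⟫ = 0 := by
  have hx0 : x ≠ 0 := by intro h; rw [h, norm_zero] at hx; norm_num at hx
  have hspan : (ℝ ∙ x) ≠ (⊤ : Submodule ℝ (EuclideanSpace ℝ (Fin n))) := by
    intro h
    have h1 : Module.finrank ℝ (ℝ ∙ x) = 1 := finrank_span_singleton hx0
    have h2 : Module.finrank ℝ (EuclideanSpace ℝ (Fin n)) = n := finrank_euclideanSpace_fin
    rw [h, finrank_top] at h1
    omega
  obtain ⟨v, -, hv⟩ := SetLike.exists_of_lt (show (ℝ ∙ x) < ⊤ from lt_top_iff_ne_top.mpr hspan)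
  set w := v - ⟪x, v⟫ • x with hw
  have hw0 : w ≠ 0 := by
    intro h
    apply hv
    rw [Submodule.mem_span_singleton]
    exact ⟨⟪x, v⟫, by rw [sub_eq_zero] at h; exact h.symm⟩
  have hxx : ⟪x, x⟫ = 1 := by
    rw [real_inner_self_eq_norm_sq, hx]; norm_num
  have hxw : ⟪x, w⟫ = 0 := by
    rw [hw, inner_sub_right, real_inner_smul_right, hxx]; ring
  refine ⟨‖w‖⁻¹ • w, ?_, ?_⟩
  · rw [norm_smul, norm_inv, norm_norm, inv_mul_cancel₀ (norm_ne_zero_iff.mpr hw0)]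
  · rw [real_inner_smul_right, hxw]; ring

theorem aux_geo (n : ℕ) (hn : 2 ≤ n) (x y : EuclideanSpace ℝ (Fin n))
    (hx : ‖x‖ = 1) (hy : ‖y‖ = 1) :
    ∃ u : EuclideanSpace ℝ (Fin n), ‖u‖ = 1 ∧ ⟪x, u⟫ = 0 ∧
      y = Real.cos (Real.arccos ⟪x, y⟫) • x + Real.sin (Real.arccos ⟪x, y⟫) • u := by
  have hxx : ⟪x, x⟫ = 1 := by rw [real_inner_self_eq_norm_sq, hx]; norm_num
  have hyy : ⟪y, y⟫ = 1 := by rw [real_inner_self_eq_norm_sq, hy]; norm_num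
  have hyx : ⟪y, x⟫ = ⟪x, y⟫ := real_inner_comm x y
  obtain ⟨c, hc⟩ : ∃ c, ⟪x, y⟫ = c := ⟨_, rfl⟩
  rw [hc]
  have hb : |c| ≤ 1 := by
    have := abs_real_inner_le_norm x y
    rwa [hx, hy, mul_one, hc] at this
  have hb1 : -1 ≤ c := neg_le_of_abs_le hb
  have hb2 : c ≤ 1 := le_of_abs_le hb
  have hcos : Real.cos (Real.arccos c) = c := Real.cos_arccos hb1 hb2
  have hsin : Real.sin (Real.arccos c) = Real.sqrt (1 - c ^ 2) := by rw [Real.sin_arccos]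
  rcases eq_or_lt_of_le hb1 with h1 | h1
  · -- c = -1, y = -x
    have hxy : y = -x := by
      have h' : ⟪x, -y⟫ = 1 := by rw [inner_neg_right, hc, ← h1]; ring
      have h'' := (inner_eq_one_iff_of_norm_eq_one hx (by rwa [norm_neg])).mp h'
      rw [h'']; simp
    obtain ⟨u, hu1, hu2⟩ := aux_ortho n hn x hx
    refine ⟨u, hu1, hu2, ?_⟩
    rw [← h1, Real.arccos_neg_one, Real.cos_pi, Real.sin_pi, hxy]
    simp
  rcases eq_or_lt_of_le hb2 with h2 | h2
  · -- c = 1, y = x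
    have hxy : x = y := (inner_eq_one_iff_of_norm_eq_one hx hy).mp (hc.trans h2)
    obtain ⟨u, hu1, hu2⟩ := aux_ortho n hn x hx
    refine ⟨u, hu1, hu2, ?_⟩
    rw [h2, Real.arccos_one, Real.cos_zero, Real.sin_zero, ← hxy]
    simp
  · -- -1 < c < 1
    have hs2 : (0:ℝ) < 1 - c ^ 2 := by nlinarith
    have hsinpos : 0 < Real.sin (Real.arccos c) := by
      rw [hsin]; exact Real.sqrt_pos.mpr hs2
    have hσ2 : Real.sin (Real.arccos c) ^ 2 = 1 - c ^ 2 := by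
      rw [hsin, Real.sq_sqrt hs2.le]
    refine ⟨(Real.sin (Real.arccos c))⁻¹ • (y - c • x), ?_, ?_, ?_⟩
    · have hnorm2 : ⟪y - c • x, y - c • x⟫ = 1 - c ^ 2 := by
        simp only [inner_sub_left, inner_sub_right, real_inner_smul_left,
          real_inner_smul_right, hxx, hyy, hyx, hc]
        ring
      have hn' : ‖y - c • x‖ = Real.sin (Real.arccos c) := by
        have h3 : ‖y - c • x‖ ^ 2 = Real.sin (Real.arccos c) ^ 2 := by
          rw [← real_inner_self_eq_norm_sq, hnorm2, hσ2]
        nlinarith [norm_nonneg (y - c • x), hsinpos]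
      rw [norm_smul, norm_inv, Real.norm_eq_abs, abs_of_pos hsinpos, hn',
        inv_mul_cancel₀ hsinpos.ne']
    · rw [real_inner_smul_right, inner_sub_right, real_inner_smul_right, hxx, hc]
      ring
    · rw [hcos, smul_smul, mul_inv_cancel₀ hsinpos.ne', one_smul]
      abel

theorem aux_curve (n : ℕ) (hn : 2 ≤ n) (x y : EuclideanSpace ℝ (Fin n))
    (hx : ‖x‖ = 1) (hy : ‖y‖ = 1) (θ θ' : ℝ) (hT : θ < θ')
    (hd : Real.arccos ⟪x, y⟫ ≤ θ' - θ) :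
    ∃ φ : ℝ → EuclideanSpace ℝ (Fin n),
      (∀ t, ‖φ t‖ = 1) ∧ φ θ = x ∧ φ θ' = y ∧
      ∀ s ∈ Set.Icc θ θ', ∀ t ∈ Set.Icc θ θ',
        Real.arccos ⟪φ s, φ t⟫ = (Real.arccos ⟪x, y⟫ / (θ' - θ)) * |s - t| := by
  obtain ⟨u, hu1, hxu, hgeo⟩ := aux_geo n hn x y hx hy
  have hxx : ⟪x, x⟫ = 1 := by rw [real_inner_self_eq_norm_sq, hx]; norm_num
  have huu : ⟪u, u⟫ = 1 := by rw [real_inner_self_eq_norm_sq, hu1]; norm_num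
  have hux : ⟪u, x⟫ = 0 := by rw [real_inner_comm]; exact hxu
  set d := Real.arccos ⟪x, y⟫ with hdd
  have hd0 : 0 ≤ d := Real.arccos_nonneg _
  have hdπ : d ≤ Real.pi := Real.arccos_le_pi _
  have hT0 : 0 < θ' - θ := by linarith
  set k := d / (θ' - θ) with hk
  have hk0 : 0 ≤ k := div_nonneg hd0 hT0.le
  set φ : ℝ → EuclideanSpace ℝ (Fin n) :=
    fun t => Real.cos (k * (t - θ)) • x + Real.sin (k * (t - θ)) • u with hφ
  have hinner : ∀ s t : ℝ, ⟪φ s, φ t⟫ = Real.cos (k * (s - t)) := by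
    intro s t
    have : k * (s - t) = k * (s - θ) - k * (t - θ) := by ring
    rw [hφ]
    simp only [inner_add_left, inner_add_right, real_inner_smul_left, real_inner_smul_right,
      hxx, huu, hxu, hux]
    rw [this, Real.cos_sub]
    ring
  refine ⟨φ, ?_, ?_, ?_, ?_⟩
  · intro t
    have h1 : ‖φ t‖ ^ 2 = 1 := by
      rw [← real_inner_self_eq_norm_sq, hinner, sub_self, mul_zero, Real.cos_zero]
    nlinarith [norm_nonneg (φ t)]
  · rw [hφ]; simp
  · have hkT : k * (θ' - θ) = d := div_mul_cancel₀ d hT0.ne'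
    rw [hφ]; simp only []
    rw [hkT]
    exact hgeo.symm
  · intro s hs t ht
    rw [hinner]
    have habs : |k * (s - t)| = k * |s - t| := by
      rw [abs_mul, abs_of_nonneg hk0]
    have hle : k * |s - t| ≤ d := by
      have h1 : |s - t| ≤ θ' - θ := by
        rw [abs_sub_le_iff]
        constructor <;> [linarith [hs.1, hs.2, ht.1, ht.2]; linarith [hs.1, hs.2, ht.1, ht.2]]
      calc k * |s - t| ≤ k * (θ' - θ) := by
            exact mul_le_mul_of_nonneg_left h1 hk0
        _ = d := div_mul_cancel₀ d hT0.ne'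
    rw [← Real.cos_abs, Real.arccos_cos (abs_nonneg _) (by rw [habs] at *; linarith), habs]

theorem keyT (n : ℕ) (hn : 2 ≤ n) (x y : EuclideanSpace ℝ (Fin n))
    (hx : ‖x‖ = 1) (hy : ‖y‖ = 1) (θ θ' : ℝ)
    (h : Real.arccos ⟪x, y⟫ < θ' - θ) : JoinedTimelike n (x, θ) (y, θ') := by
  have hT : θ < θ' := by linarith [Real.arccos_nonneg ⟪x, y⟫]
  have hT0 : (0:ℝ) < θ' - θ := by linarith
  obtain ⟨φ, h1, h2, h3, h4⟩ := aux_curve n hn x y hx hy θ θ' hT h.le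
  refine ⟨φ, fun t _ => h1 t, h2, h3, ?_⟩
  intro s hs t ht hst
  rw [h4 s hs t ht]
  have hk1 : Real.arccos ⟪x, y⟫ / (θ' - θ) < 1 := (div_lt_one hT0).mpr h
  have habs : 0 < |s - t| := abs_pos.mpr (sub_ne_zero.mpr hst)
  calc Real.arccos ⟪x, y⟫ / (θ' - θ) * |s - t| < 1 * |s - t| :=
        mul_lt_mul_of_pos_right hk1 habs
    _ = |s - t| := one_mul _

theorem keyC (n : ℕ) (hn : 2 ≤ n) (x y : EuclideanSpace ℝ (Fin n))
    (hx : ‖x‖ = 1) (hy : ‖y‖ = 1) (θ θ' : ℝ) (hT : θ < θ')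
    (h : Real.arccos ⟪x, y⟫ = θ' - θ) : JoinedCausal n (x, θ) (y, θ') := by
  have hT0 : (0:ℝ) < θ' - θ := by linarith
  obtain ⟨φ, h1, h2, h3, h4⟩ := aux_curve n hn x y hx hy θ θ' hT h.le
  refine ⟨φ, fun t _ => h1 t, h2, h3, ?_⟩
  intro s hs t ht
  rw [h4 s hs t ht, h, div_self hT0.ne', one_mul]

theorem forwardA (n : ℕ) (hn : 2 ≤ n)
    (Λ : Set (EuclideanSpace ℝ (Fin n) × ℝ)) (hsphere : ∀ p ∈ Λ, ‖p.1‖ = 1)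
    (h : ¬ ∃ p ∈ Λ, ∃ q ∈ Λ, p ≠ q ∧ p.2 ≤ q.2 ∧ JoinedTimelike n p q) :
    ∃ (E : Set (EuclideanSpace ℝ (Fin n))) (f : EuclideanSpace ℝ (Fin n) → ℝ),
      (∀ x ∈ E, ∀ y ∈ E, |f x - f y| ≤ Real.arccos ⟪x, y⟫) ∧
      Λ = (fun x => (x, f x)) '' E := by
  have mono : ∀ p ∈ Λ, ∀ q ∈ Λ, p.2 < q.2 → q.2 - p.2 ≤ Real.arccos ⟪p.1, q.1⟫ := by
    intro p hp q hq hlt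
    by_contra h'
    push_neg at h'
    apply h
    refine ⟨p, hp, q, hq, ?_, hlt.le, ?_⟩
    · intro he; rw [he] at hlt; exact lt_irrefl _ hlt
    · have := keyT n hn p.1 q.1 (hsphere p hp) (hsphere q hq) p.2 q.2 h'
      rwa [Prod.mk.eta, Prod.mk.eta] at this
  have inj : ∀ p ∈ Λ, ∀ q ∈ Λ, p.1 = q.1 → p.2 = q.2 := by
    intro p hp q hq h1
    have harc : Real.arccos ⟪p.1, q.1⟫ = 0 := by
      rw [← h1]
      have : ⟪p.1, p.1⟫ = 1 := by
        rw [real_inner_self_eq_norm_sq, hsphere p hp]; norm_num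
      rw [this, Real.arccos_one]
    rcases lt_trichotomy p.2 q.2 with hlt | heq | hlt
    · have := mono p hp q hq hlt; rw [harc] at this; linarith
    · exact heq
    · have := mono q hq p hp hlt
      rw [real_inner_comm, harc] at this; linarith
  classical
  set E := Prod.fst '' Λ with hE
  set f : EuclideanSpace ℝ (Fin n) → ℝ :=
    fun x => if h : ∃ t, (x, t) ∈ Λ then h.choose else 0 with hf
  have hfmem : ∀ p ∈ Λ, f p.1 = p.2 := by
    intro p hp
    have hex : ∃ t, (p.1, t) ∈ Λ := ⟨p.2, by rwa [Prod.mk.eta]⟩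
    have h1 : f p.1 = hex.choose := by rw [hf]; exact dif_pos hex
    have h2 : (p.1, hex.choose) ∈ Λ := hex.choose_spec
    rw [h1]
    exact inj (p.1, hex.choose) h2 p hp rfl
  have hmem : ∀ x ∈ E, (x, f x) ∈ Λ := by
    rintro x ⟨p, hp, rfl⟩
    rw [hfmem p hp, Prod.mk.eta]
    exact hp
  refine ⟨E, f, ?_, ?_⟩
  · intro x hxE y hyE
    have hx := hmem x hxE
    have hy := hmem y hyE
    rcases lt_trichotomy (f x) (f y) with hlt | heq | hlt
    · have := mono (x, f x) hx (y, f y) hy hlt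
      rw [abs_sub_comm, abs_of_nonneg (by linarith : (0:ℝ) ≤ f y - f x)]
      exact this
    · rw [heq, sub_self, abs_zero]; exact Real.arccos_nonneg _
    · have := mono (y, f y) hy (x, f x) hx hlt
      rw [real_inner_comm] at this
      rw [abs_of_nonneg (by linarith : (0:ℝ) ≤ f x - f y)]
      exact this
  · ext p
    constructor
    · intro hp
      exact ⟨p.1, ⟨p, hp, rfl⟩, by simp only []; rw [hfmem p hp]⟩
    · rintro ⟨x, hxE, rfl⟩
      exact hmem x hxE


set_option maxHeartbeats 1000000 in
/-- A subset of `S^{n-1} × ℝ` is achronal (no two of its points are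
joined by a timelike curve) iff it is the graph of a `1`-Lipschitz function, and
acausal (no two distinct points joined by a causal curve) iff it is the graph of
a contracting function. -/
theorem achronal_iff_graph_lipschitz (n : ℕ) (hn : 2 ≤ n)
    (Λ : Set (EuclideanSpace ℝ (Fin n) × ℝ)) (hsphere : ∀ p ∈ Λ, ‖p.1‖ = 1) :
    ((¬ ∃ p ∈ Λ, ∃ q ∈ Λ, p ≠ q ∧ p.2 ≤ q.2 ∧ JoinedTimelike n p q) ↔
      ∃ (E : Set (EuclideanSpace ℝ (Fin n))) (f : EuclideanSpace ℝ (Fin n) → ℝ),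
        (∀ x ∈ E, ∀ y ∈ E, |f x - f y| ≤ Real.arccos ⟪x, y⟫) ∧
        Λ = (fun x => (x, f x)) '' E) ∧
    ((¬ ∃ p ∈ Λ, ∃ q ∈ Λ, p ≠ q ∧ p.2 ≤ q.2 ∧ JoinedCausal n p q) ↔
      ∃ (E : Set (EuclideanSpace ℝ (Fin n))) (f : EuclideanSpace ℝ (Fin n) → ℝ),
        (∀ x ∈ E, ∀ y ∈ E, x ≠ y → |f x - f y| < Real.arccos ⟪x, y⟫) ∧
        Λ = (fun x => (x, f x)) '' E) := by
  constructor
  · constructor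
    · exact forwardA n hn Λ hsphere
    · rintro ⟨E, f, hf, rfl⟩ ⟨p, hp, q, hq, hne, hle, φ, h1, h2, h3, h4⟩
      obtain ⟨a, haE, ha⟩ := hp
      obtain ⟨b, hbE, hb⟩ := hq
      rcases eq_or_lt_of_le hle with heq | hlt
      · apply hne
        have : p.1 = q.1 := by rw [← h2, ← h3, heq]
        exact Prod.ext this heq
      · have hst := h4 p.2 ⟨le_refl _, hle⟩ q.2 ⟨hle, le_refl _⟩ hlt.ne
        rw [h2, h3] at hst
        have hab : Real.arccos ⟪p.1, q.1⟫ = Real.arccos ⟪a, b⟫ := by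
          rw [← ha, ← hb]
        have hval : |p.2 - q.2| = |f a - f b| := by rw [← ha, ← hb]
        rw [hab, hval] at hst
        have := hf a haE b hbE
        have h5 : |f a - f b| = |f b - f a| := abs_sub_comm _ _
        linarith [abs_sub_abs_le_abs_sub (f a) (f b)]
  · constructor
    · intro h
      have hT : ¬ ∃ p ∈ Λ, ∃ q ∈ Λ, p ≠ q ∧ p.2 ≤ q.2 ∧ JoinedTimelike n p q := by
        rintro ⟨p, hp, q, hq, hne, hle, φ, h1, h2, h3, h4⟩
        apply h
        refine ⟨p, hp, q, hq, hne, hle, φ, h1, h2, h3, ?_⟩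
        intro s hs t ht
        by_cases hst : s = t
        · subst hst
          have : ⟪φ s, φ s⟫ = 1 := by
            rw [real_inner_self_eq_norm_sq, h1 s hs]; norm_num
          rw [this, Real.arccos_one]; simp
          -- done
        · exact (h4 s hs t ht hst).le
      obtain ⟨E, f, hf, hgraph⟩ := forwardA n hn Λ hsphere hT
      have hmem : ∀ x ∈ E, (x, f x) ∈ Λ := by
        intro x hx; rw [hgraph]; exact ⟨x, hx, rfl⟩
      refine ⟨E, f, ?_, hgraph⟩
      intro x hxE y hyE hxy
      have hxs : ‖x‖ = 1 := hsphere (x, f x) (hmem x hxE)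
      have hys : ‖y‖ = 1 := hsphere (y, f y) (hmem y hyE)
      have hd0 : 0 < Real.arccos ⟪x, y⟫ := by
        rcases (Real.arccos_nonneg _).lt_or_eq with h' | h'
        · exact h'
        · exfalso
          have h1 : (1:ℝ) ≤ ⟪x, y⟫ := Real.arccos_eq_zero.mp h'.symm
          have h2 : ⟪x, y⟫ ≤ 1 := by
            have := abs_real_inner_le_norm x y
            rw [hxs, hys, mul_one] at this
            exact le_of_abs_le this
          exact hxy ((inner_eq_one_iff_of_norm_eq_one hxs hys).mp (le_antisymm h2 h1))
      rcases lt_or_eq_of_le (hf x hxE y hyE) with hlt | heq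
      · exact hlt
      · exfalso
        apply h
        rcases le_total (f x) (f y) with hle | hle
        · refine ⟨(x, f x), hmem x hxE, (y, f y), hmem y hyE, ?_, hle, ?_⟩
          · intro hc
            exact hxy (congrArg Prod.fst hc)
          · apply keyC n hn x y hxs hys (f x) (f y) ?_ ?_
            · have : |f x - f y| = f y - f x := by
                rw [abs_sub_comm, abs_of_nonneg (by linarith)]
              rw [this] at heq; linarith [hd0, heq]
            · have : |f x - f y| = f y - f x := by
                rw [abs_sub_comm, abs_of_nonneg (by linarith)]
              rw [← heq, this]
        · refine ⟨(y, f y), hmem y hyE, (x, f x), hmem x hxE, ?_, hle, ?_⟩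
          · intro hc
            exact hxy (congrArg Prod.fst hc).symm
          · apply keyC n hn y x hys hxs (f y) (f x) ?_ ?_
            · have : |f x - f y| = f x - f y := abs_of_nonneg (by linarith)
              rw [this] at heq; linarith [hd0, heq]
            · have : |f x - f y| = f x - f y := abs_of_nonneg (by linarith)
              rw [real_inner_comm, ← heq, this]
    · rintro ⟨E, f, hf, rfl⟩ ⟨p, hp, q, hq, hne, hle, φ, h1, h2, h3, h4⟩
      obtain ⟨a, haE, ha⟩ := hp
      obtain ⟨b, hbE, hb⟩ := hq
      rcases eq_or_lt_of_le hle with heq | hlt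
      · apply hne
        have : p.1 = q.1 := by rw [← h2, ← h3, heq]
        exact Prod.ext this heq
      · have hab : a ≠ b := by
          intro hc
          apply hne
          rw [← ha, ← hb, hc]
        have hst := h4 p.2 ⟨le_refl _, hle⟩ q.2 ⟨hle, le_refl _⟩
        rw [h2, h3] at hst
        have hab' : Real.arccos ⟪p.1, q.1⟫ = Real.arccos ⟪a, b⟫ := by rw [← ha, ← hb]
        have hval : |p.2 - q.2| = |f a - f b| := by rw [← ha, ← hb]
        rw [hab', hval] at hst
        have := hf a haE b hbE hab
        linarith
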